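/- Let λx.F be a closed term such that x ∈ βΩ(F) and F is β-normalizable. Then the range of λx.F in H is infinite; in fact, letting n be the number of symbols of the β-normal form of F, the terms F[x := λx₁…λxₙ.c_k] for k ∈ ℕ are pairwise non-≃, where c_k is the Church numeral for k. -/

import Mathlib

/-! ## A de Bruijn presentation of the untyped λ-calculus -/

/-- Untyped λ-terms in de Bruijn representation. -/
inductive Lam : Type where
  | var : ℕ → Lam
  | app : Lam → Lam → Lam
  | abs : Lam → Lam
  deriving DecidableEq

namespace Lam

/-- Lifting of de Bruijn indices (cutoff `d`). -/
def lift (d : ℕ) : Lam → Lam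
  | var n => if n < d then var n else var (n + 1)
  | app a b => app (lift d a) (lift d b)
  | abs a => abs (lift (d + 1) a)

/-- Capture-avoiding substitution of `u` for the free variable `k`. -/
def subst : Lam → ℕ → Lam → Lam
  | var n, k, u => if n = k then u else if k < n then var (n - 1) else var n
  | app a b, k, u => app (subst a k u) (subst b k u)
  | abs a, k, u => abs (subst a (k + 1) (lift 0 u))

/-- One-step β-reduction `▷`. -/
inductive Step : Lam → Lam → Prop
  | beta (a b : Lam) : Step (app (abs a) b) (subst a 0 b)
  | appL {a a' : Lam} (b : Lam) : Step a a' → Step (app a b) (app a' b)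
  | appR (a : Lam) {b b' : Lam} : Step b b' → Step (app a b) (app a b')
  | abs {a a' : Lam} : Step a a' → Step (Lam.abs a) (Lam.abs a')

/-- β-reduction `▷*` : reflexive and transitive closure of `▷`. -/
def Steps : Lam → Lam → Prop := Relation.ReflTransGen Step

/-- β-normal term. -/
def Normal (t : Lam) : Prop := ∀ t', ¬ Step t t'

/-- `Free x t` : the variable `x` (de Bruijn index, seen from the root) occurs free in `t`. -/
def Free : ℕ → Lam → Prop
  | x, var n => x = n
  | x, app a b => Free x a ∨ Free x b
  | x, abs a => Free (x + 1) a

/-- Closed term. -/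
def Closed (t : Lam) : Prop := ∀ x, ¬ Free x t

/-- A variable applied to a (possibly empty) list of arguments. -/
inductive HeadVarApp : Lam → Prop
  | var (n : ℕ) : HeadVarApp (var n)
  | app {a : Lam} (b : Lam) : HeadVarApp a → HeadVarApp (app a b)

/-- Head normal forms `λx₁…λxₙ.(y t₁ … tₘ)`. -/
inductive IsHNF : Lam → Prop
  | head {t : Lam} : HeadVarApp t → IsHNF t
  | abs {a : Lam} : IsHNF a → IsHNF (Lam.abs a)

/-- A term is solvable if it β-reduces to a head normal form. -/
def Solvable (t : Lam) : Prop := ∃ h, Steps t h ∧ IsHNF h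

/-- `Ω = (λx.(x x))(λx.(x x))`. -/
def Omega : Lam := app (abs (app (var 0) (var 0))) (abs (app (var 0) (var 0)))

/-- Ω-reduction `▷_Ω` : replace an unsolvable subterm by `Ω`. -/
inductive OmegaStep : Lam → Lam → Prop
  | unsolv {t : Lam} : ¬ Solvable t → OmegaStep t Omega
  | appL {a a' : Lam} (b : Lam) : OmegaStep a a' → OmegaStep (app a b) (app a' b)
  | appR (a : Lam) {b b' : Lam} : OmegaStep b b' → OmegaStep (app a b) (app a b')
  | abs {a a' : Lam} : OmegaStep a a' → OmegaStep (Lam.abs a) (Lam.abs a')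

/-- `▷_Ω*`. -/
def OmegaSteps : Lam → Lam → Prop := Relation.ReflTransGen OmegaStep

/-- `▷_{βΩ}` : union of `▷` and `▷_Ω`. -/
def BOStep (t t' : Lam) : Prop := Step t t' ∨ OmegaStep t t'

/-- `▷_{βΩ}*`. -/
def BOSteps : Lam → Lam → Prop := Relation.ReflTransGen BOStep

/-- `u ≃ v` : equality in the λ-theory H (common `▷_{βΩ}*`-reduct). -/
def SimH (u v : Lam) : Prop := ∃ w, BOSteps u w ∧ BOSteps v w

/-- Simultaneous (parallel) substitution along `σ`. -/
def psubst (σ : ℕ → Lam) : Lam → Lam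
  | var n => σ n
  | app a b => app (psubst σ a) (psubst σ b)
  | abs a => abs (psubst (fun n => match n with | 0 => var 0 | m + 1 => lift 0 (σ m)) a)

/-- `(x V)` : the application of a head `h` to a list of arguments. -/
def mkApps (h : Lam) (as : List Lam) : Lam := as.foldl app h

/-- `U ⊑ V` : some initial segment of `V` is obtained from `U` by a substitution
followed by componentwise β-reductions. -/
def Sqsubseteq (U V : List Lam) : Prop :=
  ∃ (σ : ℕ → Lam) (W : List Lam), W <+: V ∧
    List.Forall₂ (fun u w => Steps (psubst σ u) w) U W

/-! ### Occurrences as positions -/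

/-- Directions inside a term. -/
inductive Dir : Type where
  | left | right | down
  deriving DecidableEq

/-- Positions (occurrences) in a term. -/
abbrev Pos := List Dir

/-- The subterm of `t` at position `p` (if any). -/
def subtermAt : Lam → Pos → Option Lam
  | t, [] => some t
  | app a _, Dir.left :: p => subtermAt a p
  | app _ b, Dir.right :: p => subtermAt b p
  | abs a, Dir.down :: p => subtermAt a p
  | _, _ :: _ => none

/-- Replace the subterm of `t` at position `p` by `s` (if the position exists). -/
def replaceAt : Lam → Pos → Lam → Option Lam
  | _, [], s => some s
  | app a b, Dir.left :: p, s => (replaceAt a p s).map (fun a' => app a' b)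
  | app a b, Dir.right :: p, s => (replaceAt b p s).map (fun b' => app a b')
  | abs a, Dir.down :: p, s => (replaceAt a p s).map Lam.abs
  | _, _ :: _, _ => none

/-- `OccOf x t p` : position `p` is an occurrence in `t` of the free variable `x`
(index seen from the root, hence shifted by the number of binders crossed). -/
def OccOf (x : ℕ) (t : Lam) (p : Pos) : Prop :=
  subtermAt t p = some (var (x + p.count Dir.down))

/-- `ArgOf t p V` : `V` is the maximal list of arguments, in `t`, of the occurrence
sitting at position `p`; i.e. `([] V)` is the applicative context of that occurrence. -/
def ArgOf (t : Lam) (p : Pos) (V : List Lam) : Prop :=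
  ∃ (q : Pos) (h : Lam),
    p = q ++ List.replicate V.length Dir.left ∧
    (∀ q' : Pos, q ≠ q' ++ [Dir.left]) ∧
    subtermAt t q = some (mkApps h V) ∧ subtermAt t p = some h

/-- `InArgOfOcc x t p q` : `q` is an occurrence of `x` in `t` and the position `p` lies
inside one of the elements of `Arg(x_[q], t)`. -/
def InArgOfOcc (x : ℕ) (t : Lam) (p q : Pos) : Prop :=
  OccOf x t q ∧ ∃ (r : Pos) (n : ℕ),
    q = r ++ List.replicate n Dir.left ∧
    (∀ r' : Pos, r ≠ r' ++ [Dir.left]) ∧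
    ∃ (j : ℕ) (s : Pos), j < n ∧ p = r ++ List.replicate j Dir.left ++ Dir.right :: s

/-- The occurrence `p` of `x` is pure in `t` : no other occurrence `q` of `x` in `t`
is such that `p` occurs in one of the elements of `Arg(x_[q], t)`. -/
def PureOcc (x : ℕ) (t : Lam) (p : Pos) : Prop :=
  OccOf x t p ∧ ∀ q, q ≠ p → ¬ InArgOfOcc x t p q

/-- Renaming of the free variable `y` into `x`. -/
def rename (y x : ℕ) : Lam → Lam
  | var n => if n = y then var x else var n
  | app a b => app (rename y x a) (rename y x b)
  | abs a => abs (rename (y + 1) (x + 1) a)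

/-- `Residue x u v p p'` : along some β-reduction from `u` to `v`, the occurrence `p'` of
`x` in `v` is a residue (traced copy) of the occurrence `p` of `x` in `u`.  This is
expressed by marking the occurrence `p` of `x` with a fresh variable `y` and tracing the
occurrences of `y`. -/
def Residue (x : ℕ) (u v : Lam) (p p' : Pos) : Prop :=
  ∃ (y : ℕ) (u₀ v₀ : Lam),
    ¬ Free y u ∧
    replaceAt u p (var (y + p.count Dir.down)) = some u₀ ∧
    Steps u₀ v₀ ∧ rename y x v₀ = v ∧ OccOf y v₀ p'

/-- The occurrence `p` of the free variable `0` ("x") in `G` is good with respect to the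
closed term `A` : it is pure in `G` and `u[x:=A]` is solvable for every subterm `u` of
`G` in which this occurrence occurs. -/
def GoodOcc (A G : Lam) (p : Pos) : Prop :=
  PureOcc 0 G p ∧
    ∀ (q : Pos) (u : Lam), q <+: p → subtermAt G q = some u →
      Solvable (subst u (q.count Dir.down) A)

/-! ### Miscellaneous -/

/-- A fixed effective Gödel numbering of λ-terms. -/
def code : Lam → ℕ
  | var n => Nat.pair 0 n
  | app a b => Nat.pair 1 (Nat.pair (code a) (code b))
  | abs a => Nat.pair 2 (code a)

/-- Body `f^k z` of the Church numeral. -/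
def churchBody : ℕ → Lam
  | 0 => var 0
  | k + 1 => app (var 1) (churchBody k)

/-- The Church numeral `c_k = λf λz.(f^k z)`. -/
def church (k : ℕ) : Lam := abs (abs (churchBody k))

/-- `n`-fold abstraction `λx₁…λxₙ.t`. -/
def absN : ℕ → Lam → Lam
  | 0, t => t
  | n + 1, t => abs (absN n t)

/-- Number of symbols of a term. -/
def size : Lam → ℕ
  | var _ => 1
  | app a b => size a + size b + 1
  | abs a => size a + 1

/-- Subterm relation. -/
inductive Subterm : Lam → Lam → Prop
  | refl (t : Lam) : Subterm t t
  | appL {s a : Lam} (b : Lam) : Subterm s a → Subterm s (app a b)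
  | appR (a : Lam) {s b : Lam} : Subterm s b → Subterm s (app a b)
  | abs {s a : Lam} : Subterm s a → Subterm s (Lam.abs a)

/-- `t` contains no subterm of the form `(x u)` for the free variable `x`. -/
def NoVarApp : ℕ → Lam → Prop
  | _, var _ => True
  | x, app a b => a ≠ var x ∧ NoVarApp x a ∧ NoVarApp x b
  | x, abs a => NoVarApp (x + 1) a

/-- Headed by the variable `d` : term of the form `(x V)` with `x = var d`. -/
inductive Headed : ℕ → Lam → Prop
  | var (d : ℕ) : Headed d (var d)
  | app {d : ℕ} {a : Lam} (b : Lam) : Headed d a → Headed d (app a b)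

end Lam


namespace Lam

/-! ### A. basic lift/subst lemmas -/

theorem lift_lift (t : Lam) : ∀ i j, i ≤ j → lift i (lift j t) = lift (j+1) (lift i t) := by
  induction t with
  | var n =>
      intro i j h
      simp only [lift]
      split_ifs with h1 h2 h2' <;> simp only [lift] <;> split_ifs <;>
        first
          | rfl
          | omega
          | (exact absurd rfl (by omega))
          | (exact congrArg var (by omega))
  | app a b iha ihb => intro i j h; simp [lift, iha _ _ h, ihb _ _ h]
  | abs a ih => intro i j h; simp [lift, ih (i+1) (j+1) (by omega)]

theorem subst_lift (t : Lam) : ∀ d u, subst (lift d t) d u = t := by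
  induction t with
  | var n =>
      intro d u
      simp only [lift]
      split_ifs with h1 <;> simp only [subst] <;> split_ifs <;>
        first
          | rfl
          | omega
          | (exact absurd rfl (by omega))
          | (exact congrArg var (by omega))
  | app a b iha ihb => intro d u; simp [lift, subst, iha, ihb]
  | abs a ih => intro d u; simp [lift, subst, ih]

/-- free variables bounded by `c` -/
def fvb : ℕ → Lam → Prop
  | c, var n => n < c
  | c, app a b => fvb c a ∧ fvb c b
  | c, abs a => fvb (c+1) a

theorem fvb_mono {c c' : ℕ} (h : c ≤ c') : ∀ t, fvb c t → fvb c' t := by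
  intro t; induction t generalizing c c' with
  | var n => simp [fvb]; omega
  | app a b iha ihb => exact fun ⟨h1, h2⟩ => ⟨iha h h1, ihb h h2⟩
  | abs a ih => exact fun h1 => ih (by omega) h1

theorem lift_fvb {c : ℕ} {t : Lam} (h : fvb c t) : ∀ d, c ≤ d → lift d t = t := by
  induction t generalizing c with
  | var n => intro d hd; simp only [fvb] at h; simp only [lift]; rw [if_pos (by omega)]
  | app a b iha ihb => intro d hd; simp [lift, iha h.1 d hd, ihb h.2 d hd]
  | abs a ih => intro d hd; simp [lift, ih h (d+1) (by omega)]

theorem subst_fvb {c : ℕ} {t : Lam} (h : fvb c t) : ∀ k u, c ≤ k → subst t k u = t := by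
  induction t generalizing c with
  | var n =>
      intro k u hk; simp only [fvb] at h; simp only [subst]
      rw [if_neg (by omega), if_neg (by omega)]
  | app a b iha ihb => intro k u hk; simp [subst, iha h.1 k u hk, ihb h.2 k u hk]
  | abs a ih => intro k u hk; simp [subst, ih h (k+1) (lift 0 u) (by omega)]

theorem fvb_lift {c : ℕ} {t : Lam} (h : fvb c t) : ∀ d, fvb (c+1) (lift d t) := by
  induction t generalizing c with
  | var n => intro d; simp only [fvb] at h ⊢; simp only [lift]; split_ifs <;> simp only [fvb] <;> omega
  | app a b iha ihb => intro d; exact ⟨iha h.1 d, ihb h.2 d⟩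
  | abs a ih => intro d; exact ih h (d+1)

theorem fvb_subst {t : Lam} : ∀ {c} k u, fvb (c+1) t → fvb c u → k ≤ c → fvb c (subst t k u) := by
  induction t with
  | var n =>
      intro c k u h hu hk; simp only [fvb] at h; simp only [subst]
      split_ifs with h1 h2
      · exact hu
      · simp only [fvb]; omega
      · simp only [fvb]; omega
  | app a b iha ihb => intro c k u h hu hk; exact ⟨iha k u h.1 hu hk, ihb k u h.2 hu hk⟩
  | abs a ih => intro c k u h hu hk
                exact ih (k+1) (lift 0 u) h (fvb_lift hu 0) (by omega)

theorem free_lt_of_fvb {t : Lam} : ∀ {c x}, fvb c t → Free x t → x < c := by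
  induction t with
  | var n => intro c x h hf; simp [fvb] at h; simp [Free] at hf; omega
  | app a b iha ihb => intro c x h hf; rcases hf with hf | hf
                       · exact iha h.1 hf
                       · exact ihb h.2 hf
  | abs a ih => intro c x h hf; have := ih h hf; omega

theorem fvb_of_free_bound {t : Lam} : ∀ {c}, (∀ x, c ≤ x → ¬ Free x t) → fvb c t := by
  induction t with
  | var n => intro c h; simp [fvb]; by_contra hn; exact h n (by omega) rfl
  | app a b iha ihb =>
      intro c h
      exact ⟨iha (fun x hx hf => h x hx (Or.inl hf)), ihb (fun x hx hf => h x hx (Or.inr hf))⟩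
  | abs a ih =>
      intro c h
      refine ih (fun x hx hf => ?_)
      obtain ⟨y, rfl⟩ : ∃ y, x = y + 1 := ⟨x - 1, by omega⟩
      exact h y (by omega) hf

theorem closed_of_fvb0 {t : Lam} (h : fvb 0 t) : Closed t :=
  fun x hf => by have := free_lt_of_fvb h hf; omega

end Lam

namespace Lam

/-! ### B. psubst algebra -/

/-- shift a substitution under a binder -/
def up (σ : ℕ → Lam) : ℕ → Lam
  | 0 => var 0
  | m+1 => lift 0 (σ m)

theorem psubst_abs (σ : ℕ → Lam) (a : Lam) : psubst σ (abs a) = abs (psubst (up σ) a) := by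
  have key : ∀ (g : ℕ → Lam), g = up σ → abs (psubst g a) = abs (psubst (up σ) a) := by
    intro g hg; rw [hg]
  exact key _ (funext fun n => by cases n <;> rfl)

theorem psubst_congr {σ τ : ℕ → Lam} (h : σ = τ) (a : Lam) : psubst σ a = psubst τ a := by
  rw [h]

def upN : ℕ → (ℕ → Lam) → (ℕ → Lam)
  | 0, σ => σ
  | d+1, σ => up (upN d σ)

def lpow : ℕ → Lam → Lam
  | 0, t => t
  | d+1, t => lift 0 (lpow d t)

theorem upN_lt (σ : ℕ → Lam) : ∀ d n, n < d → upN d σ n = var n := by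
  intro d
  induction d with
  | zero => omega
  | succ d ih =>
      intro n hn
      cases n with
      | zero => rfl
      | succ m => show lift 0 (upN d σ m) = _; rw [ih m (by omega)]; rfl

theorem upN_ge (σ : ℕ → Lam) : ∀ d n, d ≤ n → upN d σ n = lpow d (σ (n - d)) := by
  intro d
  induction d with
  | zero => intro n _; simp [upN, lpow]
  | succ d ih =>
      intro n hn
      obtain ⟨m, rfl⟩ : ∃ m, n = m + 1 := ⟨n - 1, by omega⟩
      show lift 0 (upN d σ m) = _
      rw [ih m (by omega)]
      have h2 : m + 1 - (d+1) = m - d := by omega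
      rw [h2]
      rfl

theorem lpow_lift0 (x : Lam) : ∀ d, lpow d (lift 0 x) = lift 0 (lpow d x) := by
  intro d
  induction d with
  | zero => rfl
  | succ d ih => show lift 0 _ = _; rw [ih]; rfl

theorem lift_lpow (x : Lam) : ∀ d, lift d (lpow d x) = lpow (d+1) x := by
  intro d
  induction d with
  | zero => rfl
  | succ d ih =>
      show lift (d+1) (lift 0 (lpow d x)) = lift 0 (lift 0 (lpow d x))
      rw [← lift_lift _ 0 d (by omega), ih]
      rfl

theorem psubst_lift_comm (t : Lam) :
    ∀ (σ : ℕ → Lam) (d : ℕ),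
      psubst (upN d (up σ)) (lift d t) = lift d (psubst (upN d σ) t) := by
  induction t with
  | var n =>
      intro σ d
      by_cases h : n < d
      · simp only [lift, if_pos h, psubst, upN_lt _ _ _ h, upN_lt _ _ _ h, lift, if_pos h]
      · simp only [lift, if_neg h, psubst]
        rw [upN_ge _ _ _ (by omega), upN_ge _ _ _ (by omega)]
        have h1 : n + 1 - d = (n - d) + 1 := by omega
        rw [h1]
        show lpow d (lift 0 (σ (n-d))) = lift d (lpow d (σ (n - d)))
        rw [lpow_lift0, lift_lpow]
        rfl
  | app a b iha ihb => intro σ d; simp only [lift, psubst, iha, ihb]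
  | abs a ih =>
      intro σ d
      simp only [lift, psubst_abs]
      have : up (upN d (up σ)) = upN (d+1) (up σ) := rfl
      rw [this, ih σ (d+1)]
      rfl

theorem psubst_comp (t : Lam) :
    ∀ (σ τ : ℕ → Lam), psubst σ (psubst τ t) = psubst (fun n => psubst σ (τ n)) t := by
  induction t with
  | var n => intro σ τ; rfl
  | app a b iha ihb => intro σ τ; simp only [psubst, iha, ihb]
  | abs a ih =>
      intro σ τ
      simp only [psubst_abs, ih]
      congr 1
      apply psubst_congr
      funext n
      cases n with
      | zero => rfl
      | succ m =>
          show psubst (up σ) (lift 0 (τ m)) = lift 0 (psubst σ (τ m))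
          exact psubst_lift_comm (τ m) σ 0

/-- substitution as a parallel substitution -/
def sσ (k : ℕ) (u : Lam) : ℕ → Lam :=
  fun n => if n = k then u else if k < n then var (n-1) else var n

def lσ (d : ℕ) : ℕ → Lam := fun n => if n < d then var n else var (n+1)

theorem up_sσ (k : ℕ) (u : Lam) : up (sσ k u) = sσ (k+1) (lift 0 u) := by
  funext n
  cases n with
  | zero => simp [up, sσ]
  | succ m =>
      show lift 0 (sσ k u m) = _
      simp only [sσ]
      split_ifs <;>
      first
        | rfl
        | (exfalso; omega)
        | (exact congrArg var (by omega))
        | (simp only [lift]; rw [if_neg (by omega)]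
           first
             | rfl
             | exact congrArg var (by omega))

theorem up_lσ (d : ℕ) : up (lσ d) = lσ (d+1) := by
  funext n
  cases n with
  | zero => simp [up, lσ]
  | succ m =>
      show lift 0 (lσ d m) = _
      simp only [lσ]
      split_ifs <;>
      first
        | rfl
        | (exfalso; omega)
        | (exact congrArg var (by omega))
        | (simp only [lift]; rw [if_neg (by omega)]
           first
             | rfl
             | exact congrArg var (by omega))

theorem subst_eq_psubst (t : Lam) : ∀ k u, subst t k u = psubst (sσ k u) t := by
  induction t with
  | var n => intro k u; simp [subst, psubst, sσ]
  | app a b iha ihb => intro k u; simp [subst, psubst, iha, ihb]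
  | abs a ih => intro k u; simp only [subst, psubst_abs, ih, up_sσ]

theorem lift_eq_psubst (t : Lam) : ∀ d, lift d t = psubst (lσ d) t := by
  induction t with
  | var n => intro d; simp [lift, psubst, lσ]
  | app a b iha ihb => intro d; simp [lift, psubst, iha, ihb]
  | abs a ih => intro d; simp only [lift, psubst_abs, ih, up_lσ]

theorem subst_subst (a b v : Lam) (k : ℕ) :
    subst (subst a 0 b) k v = subst (subst a (k+1) (lift 0 v)) 0 (subst b k v) := by
  simp only [subst_eq_psubst, lift_eq_psubst, psubst_comp]
  congr 1
  funext n
  cases n with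
  | zero =>
      show psubst (sσ k v) b = psubst (sσ 0 _) (sσ (k+1) _ 0)
      have : sσ (k+1) (psubst (lσ 0) v) 0 = var 0 := by simp [sσ]
      rw [this]
      rfl
  | succ m =>
      show psubst (sσ k v) (sσ 0 b (m+1)) = psubst (sσ 0 (psubst (sσ k v) b)) (sσ (k+1) (psubst (lσ 0) v) (m+1))
      have h0 : sσ 0 b (m+1) = var m := by simp [sσ]
      rw [h0]
      by_cases h : m = k
      · subst h
        have h1 : sσ (m+1) (psubst (lσ 0) v) (m+1) = psubst (lσ 0) v := by simp [sσ]
        rw [h1, ← lift_eq_psubst, ← subst_eq_psubst, ← subst_eq_psubst, subst_lift]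
        simp [subst, psubst, sσ]
      · by_cases h2 : k < m
        · have h1 : sσ (k+1) (psubst (lσ 0) v) (m+1) = var m := by
            simp only [sσ]; rw [if_neg (by omega), if_pos (by omega)]
            exact congrArg var (by omega)
          rw [h1]
          show sσ k v m = psubst _ (var m)
          simp only [psubst, sσ]
          split_ifs <;> first | rfl | omega | (exfalso; omega) | (exact (‹False›).elim) | (exact congrArg var (by omega))
        · have h1 : sσ (k+1) (psubst (lσ 0) v) (m+1) = var (m+1) := by
            simp only [sσ]; rw [if_neg (by omega), if_neg (by omega)]
          rw [h1]
          show sσ k v m = psubst _ (var (m+1))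
          simp only [psubst, sσ]
          split_ifs <;> first | rfl | omega | (exfalso; omega) | (exact (‹False›).elim) | (exact congrArg var (by omega))

theorem lift_subst (a b : Lam) (d : ℕ) :
    lift d (subst a 0 b) = subst (lift (d+1) a) 0 (lift d b) := by
  simp only [subst_eq_psubst, lift_eq_psubst, psubst_comp]
  congr 1
  funext n
  cases n with
  | zero => simp [psubst, sσ, lσ]
  | succ m =>
      show psubst (lσ d) (sσ 0 b (m+1)) = psubst (sσ 0 (psubst (lσ d) b)) (lσ (d+1) (m+1))
      have h0 : sσ 0 b (m+1) = var m := by simp [sσ]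
      rw [h0]
      by_cases h : m < d
      · have e2 : lσ (d+1) (m+1) = var (m+1) := if_pos (by omega)
        rw [e2]
        show lσ d m = sσ 0 _ (m+1)
        rw [show lσ d m = var m from if_pos h]
        simp [sσ]
      · have e2 : lσ (d+1) (m+1) = var (m+2) := if_neg (by omega)
        rw [e2]
        show lσ d m = sσ 0 _ (m+2)
        rw [show lσ d m = var (m+1) from if_neg h]
        simp [sσ]

theorem psubst_subst (σ : ℕ → Lam) (a b : Lam) :
    psubst σ (subst a 0 b) = subst (psubst (up σ) a) 0 (psubst σ b) := by
  simp only [subst_eq_psubst, psubst_comp]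
  congr 1
  funext n
  cases n with
  | zero => simp [psubst, sσ, up]
  | succ m =>
      show psubst σ (sσ 0 b (m+1)) = psubst (sσ 0 (psubst σ b)) (up σ (m+1))
      have h0 : sσ 0 b (m+1) = var m := by simp [sσ]
      rw [h0]
      show σ m = psubst (sσ 0 (psubst σ b)) (lift 0 (σ m))
      rw [← subst_eq_psubst, subst_lift]

end Lam

namespace Lam

/-! ### C. Steps congruences, Normal and HNF facts -/

theorem Steps.refl' {t : Lam} : Steps t t := Relation.ReflTransGen.refl

theorem Steps.appL {a a' : Lam} (b : Lam) (h : Steps a a') : Steps (app a b) (app a' b) :=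
  Relation.ReflTransGen.lift (fun x => app x b) (fun _ _ h => Step.appL b h) _ _ h

theorem Steps.appR (a : Lam) {b b' : Lam} (h : Steps b b') : Steps (app a b) (app a b') :=
  Relation.ReflTransGen.lift (fun x => app a x) (fun _ _ h => Step.appR a h) _ _ h

theorem Steps.absCong {a a' : Lam} (h : Steps a a') : Steps (abs a) (abs a') :=
  Relation.ReflTransGen.lift (fun x => abs x) (fun _ _ h => Step.abs h) _ _ h

theorem Steps.appCong {a a' b b' : Lam} (ha : Steps a a') (hb : Steps b b') :
    Steps (app a b) (app a' b') :=
  Relation.ReflTransGen.trans (Steps.appL b ha) (Steps.appR a' hb)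

theorem step_lift {t t' : Lam} (h : Step t t') : ∀ d, Step (lift d t) (lift d t') := by
  induction h with
  | beta a b =>
      intro d
      have : lift d (subst a 0 b) = subst (lift (d+1) a) 0 (lift d b) := lift_subst a b d
      rw [show lift d (app (abs a) b) = app (abs (lift (d+1) a)) (lift d b) from rfl, this]
      exact Step.beta _ _
  | appL b _ ih => intro d; exact Step.appL _ (ih d)
  | appR a _ ih => intro d; exact Step.appR _ (ih d)
  | abs _ ih => intro d; exact Step.abs (ih (d+1))

theorem step_subst_left {a a' : Lam} (h : Step a a') : ∀ (k : ℕ) (b : Lam),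
    Step (subst a k b) (subst a' k b) := by
  induction h with
  | beta x y =>
      intro k b
      rw [show subst (app (abs x) y) k b = app (abs (subst x (k+1) (lift 0 b))) (subst y k b)
          from rfl, subst_subst]
      exact Step.beta _ _
  | appL b _ ih => intro k u; exact Step.appL _ (ih k u)
  | appR a _ ih => intro k u; exact Step.appR _ (ih k u)
  | abs _ ih => intro k u; exact Step.abs (ih (k+1) (lift 0 u))

theorem steps_subst_left {a a' : Lam} (h : Steps a a') (k : ℕ) (b : Lam) :
    Steps (subst a k b) (subst a' k b) :=
  Relation.ReflTransGen.lift (fun x => subst x k b) (fun _ _ h => step_subst_left h k b) _ _ h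

theorem step_subst_right (a : Lam) : ∀ {b b' : Lam}, Step b b' →
    ∀ k, Steps (subst a k b) (subst a k b') := by
  induction a with
  | var n =>
      intro b b' h k
      simp only [subst]
      split_ifs
      · exact Relation.ReflTransGen.single h
      · exact Steps.refl'
      · exact Steps.refl'
  | app x y ihx ihy => intro b b' h k; exact Steps.appCong (ihx h k) (ihy h k)
  | abs x ih =>
      intro b b' h k
      simp only [subst]
      exact Steps.absCong (ih (step_lift h 0) (k+1))

/-- normal: components -/
theorem Normal.appFun {a b : Lam} (h : Normal (app a b)) : Normal a :=
  fun a' ha => h (app a' b) (Step.appL b ha)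

theorem Normal.appArg {a b : Lam} (h : Normal (app a b)) : Normal b :=
  fun b' hb => h (app a b') (Step.appR a hb)

theorem Normal.notAbs {a b : Lam} (h : Normal (app a b)) : ∀ c, a ≠ abs c := by
  rintro c rfl
  exact h _ (Step.beta c b)

theorem Normal.absBody {a : Lam} (h : Normal (abs a)) : Normal a :=
  fun a' ha => h (abs a') (Step.abs ha)

theorem Normal.app_intro {a b : Lam} (ha : Normal a) (hb : Normal b) (hn : ∀ c, a ≠ abs c) :
    Normal (app a b) := by
  intro t' h
  cases h with
  | beta x y => exact hn x rfl
  | appL b h => exact ha _ h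
  | appR a h => exact hb _ h

theorem Normal.abs_intro {a : Lam} (ha : Normal a) : Normal (abs a) := by
  intro t' h
  cases h with
  | abs h => exact ha _ h

theorem Normal.var (n : ℕ) : Normal (var n) := by
  intro t' h; cases h

theorem normal_hnf {t : Lam} (h : Normal t) : IsHNF t := by
  induction t with
  | var n => exact IsHNF.head (HeadVarApp.var n)
  | app a b iha ihb =>
      have := iha h.appFun
      cases this with
      | head hh => exact IsHNF.head (HeadVarApp.app b hh)
      | @abs c _ => exact absurd rfl (h.notAbs c)
  | abs a ih => exact IsHNF.abs (ih h.absBody)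

theorem solvable_of_normal {t : Lam} (h : Normal t) : Solvable t :=
  ⟨t, Steps.refl', normal_hnf h⟩

theorem Solvable.absBody {a : Lam} (h : Solvable a) : Solvable (abs a) := by
  obtain ⟨h1, hs, hh⟩ := h
  exact ⟨abs h1, Steps.absCong hs, IsHNF.abs hh⟩

theorem unsolvable_body {a : Lam} (h : ¬ Solvable (abs a)) : ¬ Solvable a :=
  fun hs => h hs.absBody

/-- a step backwards preserves solvability -/
theorem solvable_of_step {t t' : Lam} (h : Step t t') (hs : Solvable t') : Solvable t := by
  obtain ⟨w, hw, hh⟩ := hs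
  exact ⟨w, Relation.ReflTransGen.head h hw, hh⟩

theorem solvable_of_steps {t t' : Lam} (h : Steps t t') (hs : Solvable t') : Solvable t := by
  obtain ⟨w, hw, hh⟩ := hs
  exact ⟨w, Relation.ReflTransGen.trans h hw, hh⟩

end Lam

namespace Lam

/-! ### D. weak head reduction, standardization (Kashima), solvability -/

/-- weak head step (partial function) -/
def wh : Lam → Option Lam
  | app (abs a) b => some (subst a 0 b)
  | app (var _) _ => none
  | app (app x y) b => (wh (app x y)).map (fun a' => app a' b)
  | var _ => none
  | abs _ => none

/-- weak head reduction -/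
def hap : Lam → Lam → Prop := Relation.ReflTransGen (fun a b => wh a = some b)

theorem wh_var (n : ℕ) : wh (var n) = none := rfl
theorem wh_abs (a : Lam) : wh (abs a) = none := rfl

theorem wh_app_nonabs {a : Lam} (h : ∀ c, a ≠ abs c) (b : Lam) :
    wh (app a b) = (wh a).map (fun a' => app a' b) := by
  cases a with
  | var n => rfl
  | app x y => rfl
  | abs c => exact absurd rfl (h c)

theorem hva_not_abs {t : Lam} (h : HeadVarApp t) : ∀ c, t ≠ abs c := by
  cases h <;> intro c hc <;> simp_all

theorem wh_none_of_hva {t : Lam} (h : HeadVarApp t) : wh t = none := by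
  induction h with
  | var n => rfl
  | @app a b ha ih => rw [wh_app_nonabs (hva_not_abs ha), ih]; rfl

theorem stuck_cases {t : Lam} (h : wh t = none) : (∃ c, t = abs c) ∨ HeadVarApp t := by
  induction t with
  | var n => exact Or.inr (HeadVarApp.var n)
  | abs a _ => exact Or.inl ⟨a, rfl⟩
  | app a b iha _ =>
      cases a with
      | abs c => simp [wh] at h
      | var n => exact Or.inr (HeadVarApp.app b (HeadVarApp.var n))
      | app x y =>
          rw [wh_app_nonabs (by intro c hc; cases hc)] at h
          rcases iha (Option.map_eq_none_iff.mp h) with ⟨c, hc⟩ | hva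
          · cases hc
          · exact Or.inr (HeadVarApp.app b hva)

theorem step_of_wh {t t' : Lam} : wh t = some t' → Step t t' := by
  induction t generalizing t' with
  | var n => intro h; cases h
  | abs a _ => intro h; cases h
  | app a b iha _ =>
      cases a with
      | abs c => intro h; cases h; exact Step.beta c b
      | var n => intro h; cases h
      | app x y =>
          intro h
          rw [wh_app_nonabs (by intro c hc; cases hc)] at h
          rcases Option.map_eq_some_iff.mp h with ⟨a', ha', rfl⟩
          exact Step.appL b (iha ha')

theorem hap_steps {t t' : Lam} (h : hap t t') : Steps t t' :=
  Relation.ReflTransGen.mono (fun _ _ hw => step_of_wh hw) _ _ h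

theorem wh_psubst {t t' : Lam} (σ : ℕ → Lam) (h : wh t = some t') :
    wh (psubst σ t) = some (psubst σ t') := by
  induction t generalizing t' with
  | var n => cases h
  | abs a _ => cases h
  | app a b iha _ =>
      cases a with
      | abs c =>
          cases h
          show wh (app (abs (psubst (up σ) c)) (psubst σ b)) = _
          rw [show wh (app (abs (psubst (up σ) c)) (psubst σ b))
              = some (subst (psubst (up σ) c) 0 (psubst σ b)) from rfl]
          rw [← psubst_subst]
      | var n => cases h
      | app x y =>
          rw [wh_app_nonabs (by intro c hc; cases hc)] at h
          rcases Option.map_eq_some_iff.mp h with ⟨a', ha', rfl⟩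
          show wh (app (app (psubst σ x) (psubst σ y)) (psubst σ b)) = _
          rw [wh_app_nonabs (by intro c hc; cases hc)]
          rw [show psubst σ (app x y) = app (psubst σ x) (psubst σ y) from rfl] at iha
          rw [iha ha']
          rfl

theorem wh_subst {t t' : Lam} (h : wh t = some t') (k : ℕ) (u : Lam) :
    wh (subst t k u) = some (subst t' k u) := by
  rw [subst_eq_psubst, subst_eq_psubst]
  exact wh_psubst _ h

theorem wh_appL {a a' : Lam} (h : wh a = some a') (b : Lam) :
    wh (app a b) = some (app a' b) := by
  have hna : ∀ c, a ≠ abs c := by rintro c rfl; cases h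
  rw [wh_app_nonabs hna, h]; rfl

theorem hap_appL {a a' : Lam} (h : hap a a') (b : Lam) : hap (app a b) (app a' b) :=
  Relation.ReflTransGen.lift (p := fun x y => wh x = some y) (fun x => app x b) (fun _ _ hw => wh_appL hw b) _ _ h

theorem hap_subst {t t' : Lam} (h : hap t t') (k : ℕ) (u : Lam) :
    hap (subst t k u) (subst t' k u) :=
  Relation.ReflTransGen.lift (p := fun x y => wh x = some y) (fun x => subst x k u) (fun _ _ hw => wh_subst hw k u) _ _ h

theorem hap_lift {t t' : Lam} (h : hap t t') (d : ℕ) : hap (lift d t) (lift d t') := by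
  have : ∀ {x y : Lam}, wh x = some y → wh (lift d x) = some (lift d y) := by
    intro x y hw
    rw [lift_eq_psubst, lift_eq_psubst]
    exact wh_psubst _ hw
  exact Relation.ReflTransGen.lift (p := fun x y => wh x = some y) (lift d) (fun _ _ hw => this hw) _ _ h

/-- head normalizability -/
inductive HSolv : Lam → Prop
  | hva {t A : Lam} : hap t A → HeadVarApp A → HSolv t
  | habs {t A : Lam} : hap t (abs A) → HSolv A → HSolv t

/-- Kashima's standard reduction -/
inductive St : Lam → Lam → Prop
  | var {M : Lam} (x : ℕ) : hap M (var x) → St M (var x)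
  | app {M A B A' B' : Lam} : hap M (app A B) → St A A' → St B B' → St M (app A' B')
  | abs {M A A' : Lam} : hap M (abs A) → St A A' → St M (abs A')

theorem st_refl (M : Lam) : St M M := by
  induction M with
  | var n => exact St.var n Relation.ReflTransGen.refl
  | app a b iha ihb => exact St.app Relation.ReflTransGen.refl iha ihb
  | abs a ih => exact St.abs Relation.ReflTransGen.refl ih

theorem st_hap {M N L : Lam} (h : hap M N) (hst : St N L) : St M L := by
  cases hst with
  | var x h2 => exact St.var x (Relation.ReflTransGen.trans h h2)
  | app h2 ha hb => exact St.app (Relation.ReflTransGen.trans h h2) ha hb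
  | abs h2 ha => exact St.abs (Relation.ReflTransGen.trans h h2) ha

theorem st_lift {M M' : Lam} (h : St M M') : ∀ d, St (lift d M) (lift d M') := by
  induction h with
  | var x h =>
      intro d
      have := hap_lift h d
      cases' Nat.lt_or_ge x d with hx hx
      · rw [show lift d (var x) = var x from by simp [lift, hx]] at this ⊢
        exact St.var x this
      · rw [show lift d (var x) = var (x+1) from by simp [lift]; omega] at this ⊢
        exact St.var (x+1) this
  | app h ha hb iha ihb =>
      intro d
      exact St.app (hap_lift h d) (iha d) (ihb d)
  | abs h ha ih =>
      intro d
      exact St.abs (hap_lift h d) (ih (d+1))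

theorem st_subst {M M' : Lam} (h : St M M') : ∀ {N N' : Lam} (k : ℕ), St N N' →
    St (subst M k N) (subst M' k N') := by
  induction h with
  | var x h =>
      intro N N' k hN
      have h2 := hap_subst h k N
      by_cases hx : x = k
      · subst hx
        rw [show subst (var x) x N = N from by simp [subst]] at h2
        rw [show subst (var x) x N' = N' from by simp [subst]]
        exact st_hap h2 hN
      · by_cases hlt : k < x
        · rw [show subst (var x) k N = var (x-1) from by simp [subst, hx, hlt]] at h2
          rw [show subst (var x) k N' = var (x-1) from by simp [subst, hx, hlt]]
          exact St.var _ h2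
        · rw [show subst (var x) k N = var x from by simp [subst, hx, hlt]] at h2
          rw [show subst (var x) k N' = var x from by simp [subst, hx, hlt]]
          exact St.var _ h2
  | app h ha hb iha ihb =>
      intro N N' k hN
      exact St.app (hap_subst h k N) (iha k hN) (ihb k hN)
  | abs h ha ih =>
      intro N N' k hN
      have h2 := hap_subst h k N
      exact St.abs h2 (ih (k+1) (st_lift hN 0))

theorem st_step {M N : Lam} (h : St M N) : ∀ {N' : Lam}, Step N N' → St M N' := by
  induction h with
  | var x h => intro N' hs; cases hs
  | @app M A B A' B' h ha hb iha ihb =>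
      intro N' hs
      cases hs with
      | appL b h2 => exact St.app h (iha h2) hb
      | appR a h2 => exact St.app h ha (ihb h2)
      | beta c b =>
          cases ha with
          | abs h3 hc =>
              have h4 : hap M (app (abs _) B) :=
                Relation.ReflTransGen.trans h (hap_appL h3 B)
              have h5 : hap M (subst _ 0 B) :=
                Relation.ReflTransGen.tail h4 rfl
              exact st_hap h5 (st_subst hc 0 hb)
  | abs h ha ih =>
      intro N' hs
      cases hs with
      | abs h2 => exact St.abs h (ih h2)

theorem st_of_steps {M N : Lam} (h : Steps M N) : St M N := by
  induction h with
  | refl => exact st_refl M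
  | tail h1 h2 ih => exact st_step ih h2

theorem extract_hva {M H : Lam} (h : St M H) (hh : HeadVarApp H) :
    ∃ A, hap M A ∧ HeadVarApp A := by
  induction h with
  | var x h => exact ⟨var x, h, HeadVarApp.var x⟩
  | @app M A B A' B' h ha hb iha ihb =>
      cases hh with
      | app _ hA' =>
          rcases iha hA' with ⟨A₀, hapA, hvaA⟩
          exact ⟨app A₀ B, Relation.ReflTransGen.trans h (hap_appL hapA B), HeadVarApp.app B hvaA⟩
  | abs h ha ih => cases hh

theorem hsolv_of_st {H : Lam} (hh : IsHNF H) : ∀ {M : Lam}, St M H → HSolv M := by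
  induction hh with
  | head h =>
      intro M hst
      rcases extract_hva hst h with ⟨A, h1, h2⟩
      exact HSolv.hva h1 h2
  | abs hh ih =>
      intro M hst
      cases hst with
      | abs h1 ha => exact HSolv.habs h1 (ih ha)

theorem hsolv_of_solvable {t : Lam} (h : Solvable t) : HSolv t := by
  obtain ⟨H, hs, hh⟩ := h
  exact hsolv_of_st hh (st_of_steps hs)

theorem solvable_of_hsolv {t : Lam} (h : HSolv t) : Solvable t := by
  induction h with
  | hva h1 h2 => exact ⟨_, hap_steps h1, IsHNF.head h2⟩
  | habs h1 _ ih =>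
      obtain ⟨w, ws, whh⟩ := ih
      exact ⟨abs w, Relation.ReflTransGen.trans (hap_steps h1) (Steps.absCong ws), IsHNF.abs whh⟩

/-! ### weak head chains with length -/

inductive Rch : ℕ → Lam → Lam → Prop
  | zero (t : Lam) : Rch 0 t t
  | succ {n : ℕ} {t t' s : Lam} : wh t = some t' → Rch n t' s → Rch (n+1) t s

theorem rch_hap {n : ℕ} {t s : Lam} (h : Rch n t s) : hap t s := by
  induction h with
  | zero t => exact Relation.ReflTransGen.refl
  | succ hw _ ih => exact Relation.ReflTransGen.head hw ih

theorem hap_rch {t s : Lam} (h : hap t s) : ∃ n, Rch n t s := by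
  induction h using Relation.ReflTransGen.head_induction_on with
  | refl => exact ⟨0, Rch.zero s⟩
  | head hw _ ih => obtain ⟨n, hn⟩ := ih; exact ⟨n+1, Rch.succ hw hn⟩

theorem rch_psubst_rev : ∀ (n : ℕ) (u : Lam) (σ : ℕ → Lam) (A : Lam),
    Rch n (psubst σ u) A → wh A = none →
    ∃ W m, hap u W ∧ wh W = none ∧ m ≤ n ∧ Rch m (psubst σ W) A := by
  intro n
  induction n with
  | zero =>
      intro u σ A h hA
      cases h
      cases hw : wh u with
      | none => exact ⟨u, 0, Relation.ReflTransGen.refl, hw, le_refl _, Rch.zero _⟩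
      | some u' =>
          have := wh_psubst σ hw
          rw [this] at hA; cases hA
  | succ n ih =>
      intro u σ A h hA
      cases hw : wh u with
      | none => exact ⟨u, n+1, Relation.ReflTransGen.refl, hw, le_refl _, h⟩
      | some u' =>
          have hps := wh_psubst σ hw
          cases h with
          | succ hw2 hr =>
              rw [hps] at hw2
              cases hw2
              rcases ih u' σ A hr hA with ⟨W, m, h1, h2, h3, h4⟩
              exact ⟨W, m, Relation.ReflTransGen.head hw h1, h2, by omega, h4⟩

theorem hsolv_psubst_rev {X : Lam} (h : HSolv X) :
    ∀ (u : Lam) (σ : ℕ → Lam), X = psubst σ u → HSolv u := by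
  induction h with
  | @hva t A h1 h2 =>
      intro u σ he
      subst he
      obtain ⟨n, hn⟩ := hap_rch h1
      rcases rch_psubst_rev n u σ A hn (wh_none_of_hva h2) with ⟨W, m, hW, hstuck, _, hr⟩
      rcases stuck_cases hstuck with ⟨c, rfl⟩ | hva
      · rw [psubst_abs] at hr
        cases hr with
        | zero => cases h2
        | succ hw _ => cases hw
      · exact HSolv.hva hW hva
  | @habs t A h1 h2 ih =>
      intro u σ he
      subst he
      obtain ⟨n, hn⟩ := hap_rch h1
      rcases rch_psubst_rev n u σ (abs A) hn rfl with ⟨W, m, hW, hstuck, _, hr⟩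
      rcases stuck_cases hstuck with ⟨c, rfl⟩ | hva
      · rw [psubst_abs] at hr
        cases hr with
        | zero => exact HSolv.habs hW (ih c (up σ) rfl)
        | succ hw _ => cases hw
      · exact HSolv.hva hW hva

theorem unsolvable_psubst {u : Lam} (h : ¬ Solvable u) (σ : ℕ → Lam) :
    ¬ Solvable (psubst σ u) :=
  fun hs => h (solvable_of_hsolv (hsolv_psubst_rev (hsolv_of_solvable hs) u σ rfl))

theorem unsolvable_subst {u : Lam} (h : ¬ Solvable u) (k : ℕ) (B : Lam) :
    ¬ Solvable (subst u k B) := by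
  rw [subst_eq_psubst]
  exact unsolvable_psubst h _

theorem unsolvable_lift {u : Lam} (h : ¬ Solvable u) (d : ℕ) :
    ¬ Solvable (lift d u) := by
  rw [lift_eq_psubst]
  exact unsolvable_psubst h _

end Lam

namespace Lam

/-! ### E. parallel βΩ reduction and confluence of ▷βΩ -/

def omegaBody : Lam := app (var 0) (var 0)

theorem omega_eq : Omega = app (abs omegaBody) (abs omegaBody) := rfl

theorem omega_fvb : fvb 0 Omega := by
  refine ⟨?_, ?_⟩ <;> exact ⟨by simp [fvb], by simp [fvb]⟩

theorem wh_omega : wh Omega = some Omega := rfl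

theorem rch_omega {n : ℕ} {A : Lam} (h : Rch n Omega A) : A = Omega := by
  induction n with
  | zero => cases h; rfl
  | succ n ih =>
      cases h with
      | succ hw hr =>
          rw [wh_omega] at hw
          cases hw
          exact ih hr

theorem omega_not_hva : ¬ HeadVarApp Omega := by
  intro h
  rw [omega_eq] at h
  cases h with
  | app _ h2 => cases h2

theorem omega_unsolvable : ¬ Solvable Omega := by
  intro h
  have := hsolv_of_solvable h
  cases this with
  | hva h1 h2 =>
      obtain ⟨n, hn⟩ := hap_rch h1
      rw [rch_omega hn] at h2
      exact omega_not_hva h2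
  | habs h1 _ =>
      obtain ⟨n, hn⟩ := hap_rch h1
      have := rch_omega hn
      rw [omega_eq] at this
      cases this

/-- parallel βΩ-reduction -/
inductive PBO : Lam → Lam → Prop
  | unsolv {t : Lam} : ¬ Solvable t → PBO t Omega
  | var (n : ℕ) : PBO (var n) (var n)
  | app {a a' b b' : Lam} : PBO a a' → PBO b b' → PBO (app a b) (app a' b')
  | abs {a a' : Lam} : PBO a a' → PBO (abs a) (abs a')
  | beta {a a' b b' : Lam} : PBO a a' → PBO b b' → PBO (app (abs a) b) (subst a' 0 b')

/-- parallel Ω-reduction -/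
inductive POm : Lam → Lam → Prop
  | unsolv {t : Lam} : ¬ Solvable t → POm t Omega
  | var (n : ℕ) : POm (var n) (var n)
  | app {a a' b b' : Lam} : POm a a' → POm b b' → POm (app a b) (app a' b')
  | abs {a a' : Lam} : POm a a' → POm (abs a) (abs a')

theorem pom_refl (t : Lam) : POm t t := by
  induction t with
  | var n => exact POm.var n
  | app a b iha ihb => exact POm.app iha ihb
  | abs a ih => exact POm.abs ih

theorem pbo_refl (t : Lam) : PBO t t := by
  induction t with
  | var n => exact PBO.var n
  | app a b iha ihb => exact PBO.app iha ihb
  | abs a ih => exact PBO.abs ih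

theorem pom_pbo {t s : Lam} (h : POm t s) : PBO t s := by
  induction h with
  | unsolv h => exact PBO.unsolv h
  | var n => exact PBO.var n
  | app _ _ iha ihb => exact PBO.app iha ihb
  | abs _ ih => exact PBO.abs ih

theorem omegaStep_pom {t s : Lam} (h : OmegaStep t s) : POm t s := by
  induction h with
  | unsolv h => exact POm.unsolv h
  | appL b _ ih => exact POm.app ih (pom_refl b)
  | appR a _ ih => exact POm.app (pom_refl a) ih
  | abs _ ih => exact POm.abs ih

theorem step_pbo {t s : Lam} (h : Step t s) : PBO t s := by
  induction h with
  | beta a b => exact PBO.beta (pbo_refl a) (pbo_refl b)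
  | appL b _ ih => exact PBO.app ih (pbo_refl b)
  | appR a _ ih => exact PBO.app (pbo_refl a) ih
  | abs _ ih => exact PBO.abs ih

theorem lift_omega (d : ℕ) : lift d Omega = Omega :=
  lift_fvb (fvb_mono (Nat.zero_le d) _ omega_fvb) d (le_refl d)

theorem subst_omega (k : ℕ) (u : Lam) : subst Omega k u = Omega :=
  subst_fvb (fvb_mono (Nat.zero_le k) _ omega_fvb) k u (le_refl k)

theorem pom_lift {t s : Lam} (h : POm t s) : ∀ d, POm (lift d t) (lift d s) := by
  induction h with
  | unsolv h => intro d; rw [lift_omega]; exact POm.unsolv (unsolvable_lift h d)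
  | var n => intro d; simp only [lift]; split_ifs <;> exact pom_refl _
  | app _ _ iha ihb => intro d; exact POm.app (iha d) (ihb d)
  | abs _ ih => intro d; exact POm.abs (ih (d+1))

theorem pbo_lift {t s : Lam} (h : PBO t s) : ∀ d, PBO (lift d t) (lift d s) := by
  induction h with
  | unsolv h => intro d; rw [lift_omega]; exact PBO.unsolv (unsolvable_lift h d)
  | var n => intro d; simp only [lift]; split_ifs <;> exact pbo_refl _
  | app _ _ iha ihb => intro d; exact PBO.app (iha d) (ihb d)
  | abs _ ih => intro d; exact PBO.abs (ih (d+1))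
  | @beta a a' b b' _ _ iha ihb =>
      intro d
      rw [show lift d (app (abs a) b) = app (abs (lift (d+1) a)) (lift d b) from rfl,
          lift_subst]
      exact PBO.beta (iha (d+1)) (ihb d)

theorem pom_subst {M M' : Lam} (h : POm M M') :
    ∀ {N N' : Lam} (k : ℕ), POm N N' → POm (subst M k N) (subst M' k N') := by
  induction h with
  | unsolv h =>
      intro N N' k _
      rw [subst_omega]
      exact POm.unsolv (unsolvable_subst h k N)
  | var n =>
      intro N N' k hN
      simp only [subst]
      split_ifs <;> first | exact hN | exact pom_refl _
  | app _ _ iha ihb => intro N N' k hN; exact POm.app (iha k hN) (ihb k hN)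
  | abs _ ih => intro N N' k hN; exact POm.abs (ih (k+1) (pom_lift hN 0))

theorem pbo_subst {M M' : Lam} (h : PBO M M') :
    ∀ {N N' : Lam} (k : ℕ), PBO N N' → PBO (subst M k N) (subst M' k N') := by
  induction h with
  | unsolv h =>
      intro N N' k _
      rw [subst_omega]
      exact PBO.unsolv (unsolvable_subst h k N)
  | var n =>
      intro N N' k hN
      simp only [subst]
      split_ifs <;> first | exact hN | exact pbo_refl _
  | app _ _ iha ihb => intro N N' k hN; exact PBO.app (iha k hN) (ihb k hN)
  | abs _ ih => intro N N' k hN; exact PBO.abs (ih (k+1) (pbo_lift hN 0))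
  | @beta a a' b b' _ _ iha ihb =>
      intro N N' k hN
      rw [show subst (app (abs a) b) k N
          = app (abs (subst a (k+1) (lift 0 N))) (subst b k N) from rfl,
          subst_subst]
      exact PBO.beta (iha (k+1) (pbo_lift hN 0)) (ihb k hN)

/-- decomposition: a parallel βΩ step is a β-reduction followed by a parallel Ω step -/
theorem pbo_decomp {t s : Lam} (h : PBO t s) : ∃ m, Steps t m ∧ POm m s := by
  induction h with
  | @unsolv t h => exact ⟨t, Steps.refl', POm.unsolv h⟩
  | var n => exact ⟨var n, Steps.refl', pom_refl _⟩
  | app _ _ iha ihb =>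
      obtain ⟨ma, hsa, hpa⟩ := iha
      obtain ⟨mb, hsb, hpb⟩ := ihb
      exact ⟨app ma mb, Steps.appCong hsa hsb, POm.app hpa hpb⟩
  | abs _ ih =>
      obtain ⟨m, hs, hp⟩ := ih
      exact ⟨abs m, Steps.absCong hs, POm.abs hp⟩
  | @beta a a' b b' _ _ iha ihb =>
      obtain ⟨ma, hsa, hpa⟩ := iha
      obtain ⟨mb, hsb, hpb⟩ := ihb
      refine ⟨subst ma 0 mb, ?_, pom_subst hpa 0 hpb⟩
      have h1 : Steps (app (abs a) b) (app (abs ma) mb) :=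
        Steps.appCong (Steps.absCong hsa) hsb
      exact Relation.ReflTransGen.tail h1 (Step.beta ma mb)

/-! Ω-parallel reduction reflects solvability -/

theorem hva_of_pom {B A : Lam} (h : POm B A) (hh : HeadVarApp A) : HeadVarApp B := by
  induction h with
  | unsolv h => exact absurd hh omega_not_hva
  | var n => exact hh
  | app _ _ iha _ =>
      cases hh with
      | app _ h1 => exact HeadVarApp.app _ (iha h1)
  | abs _ _ => cases hh

theorem pom_sim1 {t s : Lam} (h : POm t s) :
    ∀ {s' : Lam}, wh s = some s' → (∃ t', wh t = some t' ∧ POm t' s') ∨ s' = s := by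
  induction h with
  | unsolv h =>
      intro s' hw
      rw [wh_omega] at hw
      exact Or.inr (Option.some.inj hw).symm
  | var n => intro s' hw; cases hw
  | @app a a' b b' ha hb iha _ =>
      intro s' hw
      cases a' with
      | abs c' =>
          cases hw
          -- s' = subst c' 0 b'
          cases ha with
          | @abs c _ hc =>
              exact Or.inl ⟨subst c 0 b, rfl, pom_subst hc 0 hb⟩
      | var v => cases hw
      | app x y =>
          rw [wh_app_nonabs (by intro c hc; cases hc)] at hw
          rcases Option.map_eq_some_iff.mp hw with ⟨a₁', ha₁', rfl⟩
          rcases iha ha₁' with ⟨a₁, hwa, hpa⟩ | heq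
          · exact Or.inl ⟨app a₁ b, wh_appL hwa b, POm.app hpa hb⟩
          · rw [heq]; exact Or.inr rfl
  | abs _ _ => intro s' hw; cases hw

theorem rch_pom_rev : ∀ (n : ℕ) {s A t : Lam}, POm t s → Rch n s A →
    ∃ B, hap t B ∧ POm B A := by
  intro n
  induction n with
  | zero => intro s A t h hr; cases hr; exact ⟨t, Relation.ReflTransGen.refl, h⟩
  | succ n ih =>
      intro s A t h hr
      cases hr with
      | succ hw hr2 =>
          rcases pom_sim1 h hw with ⟨t', hwt, hp⟩ | heq
          · rcases ih hp hr2 with ⟨B, h1, h2⟩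
            exact ⟨B, Relation.ReflTransGen.head hwt h1, h2⟩
          · rw [heq] at hr2
            exact ih h hr2

theorem pom_hsolv_rev {s : Lam} (h : HSolv s) : ∀ {t : Lam}, POm t s → HSolv t := by
  induction h with
  | @hva s A h1 h2 =>
      intro t hp
      obtain ⟨n, hn⟩ := hap_rch h1
      rcases rch_pom_rev n hp hn with ⟨B, hB1, hB2⟩
      exact HSolv.hva hB1 (hva_of_pom hB2 h2)
  | @habs s A h1 h2 ih =>
      intro t hp
      obtain ⟨n, hn⟩ := hap_rch h1
      rcases rch_pom_rev n hp hn with ⟨B, hB1, hB2⟩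
      cases hB2 with
      | abs h3 => exact HSolv.habs hB1 (ih h3)

theorem pom_solvable_rev {t s : Lam} (h : POm t s) (hs : Solvable s) : Solvable t :=
  solvable_of_hsolv (pom_hsolv_rev (hsolv_of_solvable hs) h)

theorem pbo_solvable_rev {t s : Lam} (h : PBO t s) (hs : Solvable s) : Solvable t := by
  obtain ⟨m, h1, h2⟩ := pbo_decomp h
  exact solvable_of_steps h1 (pom_solvable_rev h2 hs)

theorem pbo_unsolvable {t s : Lam} (h : PBO t s) (ht : ¬ Solvable t) : ¬ Solvable s :=
  fun hs => ht (pbo_solvable_rev h hs)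

end Lam

namespace Lam

/-! ### F. the full βΩ-development and confluence -/

theorem steps_abs_inv {a w : Lam} (h : Steps (abs a) w) : ∃ a', w = abs a' ∧ Steps a a' := by
  induction h with
  | refl => exact ⟨a, rfl, Steps.refl'⟩
  | tail h1 h2 ih =>
      obtain ⟨a', rfl, hs⟩ := ih
      cases h2 with
      | abs h3 => exact ⟨_, rfl, Relation.ReflTransGen.tail hs h3⟩

theorem solvable_abs_inv {a : Lam} (h : Solvable (abs a)) : Solvable a := by
  obtain ⟨w, hs, hh⟩ := h
  obtain ⟨a', rfl, hs'⟩ := steps_abs_inv hs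
  cases hh with
  | head h1 => cases h1
  | abs h1 => exact ⟨a', hs', h1⟩

theorem hsolv_wh_inv {t t' : Lam} (h : HSolv t) (hw : wh t = some t') : HSolv t' := by
  cases h with
  | hva h1 h2 =>
      cases (Relation.ReflTransGen.cases_head h1) with
      | inl he => rw [he, wh_none_of_hva h2] at hw; cases hw
      | inr hc =>
          obtain ⟨c, hc1, hc2⟩ := hc
          rw [hw] at hc1
          cases hc1
          exact HSolv.hva hc2 h2
  | habs h1 h2 =>
      cases (Relation.ReflTransGen.cases_head h1) with
      | inl he => rw [he] at hw; cases hw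
      | inr hc =>
          obtain ⟨c, hc1, hc2⟩ := hc
          rw [hw] at hc1
          cases hc1
          exact HSolv.habs hc2 h2

theorem solvable_beta_fun {c b : Lam} (h : Solvable (app (abs c) b)) : Solvable (abs c) := by
  by_contra hn
  have hc : ¬ Solvable c := fun hs => hn hs.absBody
  have h1 : HSolv (subst c 0 b) := hsolv_wh_inv (hsolv_of_solvable h) rfl
  exact unsolvable_subst hc 0 b (solvable_of_hsolv h1)

open scoped Classical in
/-- the full βΩ-development -/
noncomputable def dOm : Lam → Lam
  | var n => var n
  | abs a => if Solvable (abs a) then abs (dOm a) else Omega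
  | app (abs a) b => if Solvable (app (abs a) b) then subst (dOm a) 0 (dOm b) else Omega
  | app (var n) b => if Solvable (app (var n) b) then app (dOm (var n)) (dOm b) else Omega
  | app (app x y) b => if Solvable (app (app x y) b) then app (dOm (app x y)) (dOm b) else Omega

theorem dOm_unsolv {t : Lam} (h : ¬ Solvable t) : dOm t = Omega := by
  cases t with
  | var n => exact absurd (solvable_of_normal (Normal.var n)) h
  | abs a => simp [dOm, h]
  | app a b => cases a <;> simp [dOm, h]

theorem dOm_abs {a : Lam} (h : Solvable (abs a)) : dOm (abs a) = abs (dOm a) := by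
  simp [dOm, h]

theorem dOm_beta {a b : Lam} (h : Solvable (app (abs a) b)) :
    dOm (app (abs a) b) = subst (dOm a) 0 (dOm b) := by
  simp [dOm, h]

theorem dOm_app {a b : Lam} (h : Solvable (app a b)) (hna : ∀ c, a ≠ abs c) :
    dOm (app a b) = app (dOm a) (dOm b) := by
  cases a with
  | var n => simp [dOm, h]
  | app x y => simp [dOm, h]
  | abs c => exact absurd rfl (hna c)

theorem pbo_abs_inv {x y : Lam} (h : PBO (abs x) (abs y)) : PBO x y := by
  cases h with
  | abs h1 => exact h1

theorem pbo_triangle {t s : Lam} (h : PBO t s) : PBO s (dOm t) := by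
  induction h with
  | @unsolv t h => rw [dOm_unsolv h]; exact pbo_refl Omega
  | var n => exact PBO.var n
  | @abs a a' h ih =>
      by_cases hs : Solvable (abs a)
      · rw [dOm_abs hs]
        exact PBO.abs ih
      · rw [dOm_unsolv hs]
        exact PBO.unsolv (pbo_unsolvable (PBO.abs h) hs)
  | @app a a' b b' ha hb iha ihb =>
      by_cases hs : Solvable (app a b)
      · cases a with
        | abs c =>
            rw [dOm_beta hs]
            have hsc : Solvable (abs c) := solvable_beta_fun hs
            cases ha with
            | unsolv h1 => exact absurd hsc h1
            | @abs _ c' hc =>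
                rw [dOm_abs hsc] at iha
                exact PBO.beta (pbo_abs_inv iha) ihb
        | var n =>
            rw [dOm_app hs (by intro c hc; cases hc)]
            exact PBO.app iha ihb
        | app x y =>
            rw [dOm_app hs (by intro c hc; cases hc)]
            exact PBO.app iha ihb
      · rw [dOm_unsolv hs]
        exact PBO.unsolv (pbo_unsolvable (PBO.app ha hb) hs)
  | @beta a a' b b' ha hb iha ihb =>
      by_cases hs : Solvable (app (abs a) b)
      · rw [dOm_beta hs]
        exact pbo_subst iha 0 ihb
      · rw [dOm_unsolv hs]
        exact PBO.unsolv (pbo_unsolvable (PBO.beta ha hb) hs)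

end Lam

namespace Lam

/-! ### G. confluence of ▷βΩ* and the theory H -/

theorem bostep_pbo {t s : Lam} (h : BOStep t s) : PBO t s := by
  cases h with
  | inl h => exact step_pbo h
  | inr h => exact pom_pbo (omegaStep_pom h)

theorem OmegaSteps.appL {a a' : Lam} (b : Lam) (h : OmegaSteps a a') :
    OmegaSteps (app a b) (app a' b) :=
  Relation.ReflTransGen.lift (fun x => app x b) (fun _ _ h => OmegaStep.appL b h) _ _ h

theorem OmegaSteps.appR (a : Lam) {b b' : Lam} (h : OmegaSteps b b') :
    OmegaSteps (app a b) (app a b') :=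
  Relation.ReflTransGen.lift (fun x => app a x) (fun _ _ h => OmegaStep.appR a h) _ _ h

theorem OmegaSteps.absCong {a a' : Lam} (h : OmegaSteps a a') :
    OmegaSteps (abs a) (abs a') :=
  Relation.ReflTransGen.lift (fun x => abs x) (fun _ _ h => OmegaStep.abs h) _ _ h

theorem pom_omegaSteps {t s : Lam} (h : POm t s) : OmegaSteps t s := by
  induction h with
  | unsolv h => exact Relation.ReflTransGen.single (OmegaStep.unsolv h)
  | var n => exact Relation.ReflTransGen.refl
  | app _ _ iha ihb =>
      exact Relation.ReflTransGen.trans (OmegaSteps.appL _ iha) (OmegaSteps.appR _ ihb)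
  | abs _ ih => exact OmegaSteps.absCong ih

theorem steps_bosteps {t s : Lam} (h : Steps t s) : BOSteps t s :=
  Relation.ReflTransGen.mono (fun _ _ h => Or.inl h) _ _ h

theorem omegaSteps_bosteps {t s : Lam} (h : OmegaSteps t s) : BOSteps t s :=
  Relation.ReflTransGen.mono (fun _ _ h => Or.inr h) _ _ h

theorem pbo_bosteps {t s : Lam} (h : PBO t s) : BOSteps t s := by
  obtain ⟨m, h1, h2⟩ := pbo_decomp h
  exact Relation.ReflTransGen.trans (steps_bosteps h1) (omegaSteps_bosteps (pom_omegaSteps h2))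

theorem bosteps_iff_rtg_pbo {t s : Lam} : BOSteps t s ↔ Relation.ReflTransGen PBO t s := by
  constructor
  · exact fun h => Relation.ReflTransGen.mono (fun _ _ h => bostep_pbo h) _ _ h
  · intro h
    induction h with
    | refl => exact Relation.ReflTransGen.refl
    | tail _ h2 ih => exact Relation.ReflTransGen.trans ih (pbo_bosteps h2)

theorem bo_confluent {t a b : Lam} (h1 : BOSteps t a) (h2 : BOSteps t b) :
    ∃ c, BOSteps a c ∧ BOSteps b c := by
  rw [bosteps_iff_rtg_pbo] at h1 h2
  have := Relation.church_rosser
    (r := PBO)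
    (fun x y z hxy hxz =>
      ⟨dOm x, Relation.ReflGen.single (pbo_triangle hxy),
        Relation.ReflTransGen.single (pbo_triangle hxz)⟩) h1 h2
  obtain ⟨c, hc1, hc2⟩ := this
  exact ⟨c, bosteps_iff_rtg_pbo.mpr hc1, bosteps_iff_rtg_pbo.mpr hc2⟩

theorem simH_equivalence : Equivalence SimH := by
  constructor
  · exact fun t => ⟨t, Relation.ReflTransGen.refl, Relation.ReflTransGen.refl⟩
  · exact fun ⟨w, h1, h2⟩ => ⟨w, h2, h1⟩
  · rintro u v w ⟨w1, h1, h2⟩ ⟨w2, h3, h4⟩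
    obtain ⟨c, hc1, hc2⟩ := bo_confluent h2 h3
    exact ⟨c, Relation.ReflTransGen.trans h1 hc1, Relation.ReflTransGen.trans h4 hc2⟩

/-- βΩ-normal forms -/
theorem no_omegaStep_of_normal {t s : Lam} (h : OmegaStep t s) (hn : Normal t) : False := by
  induction h with
  | unsolv h => exact h (solvable_of_normal hn)
  | appL b _ ih => exact ih hn.appFun
  | appR a _ ih => exact ih hn.appArg
  | abs _ ih => exact ih hn.absBody

theorem bosteps_normal_eq {t w : Lam} (hn : Normal t) (h : BOSteps t w) : w = t := by
  induction h with
  | refl => rfl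
  | tail h1 h2 ih =>
      subst ih
      cases h2 with
      | inl h3 => exact absurd h3 (hn _)
      | inr h3 => exact absurd hn (fun hh => no_omegaStep_of_normal h3 hh)

theorem not_simH_of_distinct_nf {u v nu nv : Lam}
    (hu : BOSteps u nu) (hv : BOSteps v nv)
    (hnu : Normal nu) (hnv : Normal nv) (hne : nu ≠ nv) : ¬ SimH u v := by
  rintro ⟨w, h1, h2⟩
  obtain ⟨c1, hc1, hc2⟩ := bo_confluent h1 hu
  have e1 : c1 = nu := bosteps_normal_eq hnu hc2
  subst e1
  obtain ⟨c2, hd1, hd2⟩ := bo_confluent h2 hv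
  have e2 : c2 = nv := bosteps_normal_eq hnv hd2
  subst e2
  obtain ⟨d, he1, he2⟩ := bo_confluent hc1 hd1
  exact hne ((bosteps_normal_eq hnu he1).symm.trans (bosteps_normal_eq hnv he2))

end Lam

namespace Lam

/-! ### H. the normal forms of `N[x := λx₁…λxₙ.c_k]` -/

theorem churchBody_fvb (k : ℕ) : fvb 2 (churchBody k) := by
  induction k with
  | zero => simp [churchBody, fvb]
  | succ k ih => exact ⟨by simp [fvb], ih⟩

theorem church_fvb (k : ℕ) : fvb 0 (church k) := by
  simpa [church, fvb] using churchBody_fvb k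

theorem absN_fvb {t : Lam} (h : fvb 0 t) : ∀ i, fvb 0 (absN i t) := by
  intro i
  induction i with
  | zero => exact h
  | succ i ih =>
      show fvb (0+1) (absN i t)
      exact fvb_mono (by omega) _ ih

theorem churchBody_normal (k : ℕ) : Normal (churchBody k) := by
  induction k with
  | zero => exact Normal.var 0
  | succ k ih =>
      exact Normal.app_intro (Normal.var 1) ih (by intro c hc; cases hc)

theorem church_normal (k : ℕ) : Normal (church k) :=
  Normal.abs_intro (Normal.abs_intro (churchBody_normal k))

theorem absN_normal {t : Lam} (h : Normal t) : ∀ i, Normal (absN i t) := by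
  intro i
  induction i with
  | zero => exact h
  | succ i ih => exact Normal.abs_intro ih

theorem churchBody_inj : ∀ {k k' : ℕ}, churchBody k = churchBody k' → k = k' := by
  intro k
  induction k with
  | zero => intro k' h; cases k' with
            | zero => rfl
            | succ m => simp [churchBody] at h
  | succ k ih =>
      intro k' h
      cases k' with
      | zero => simp [churchBody] at h
      | succ m =>
          simp only [churchBody] at h
          injection h with h1 h2
          rw [ih h2]

theorem absN_church_inj {i k k' : ℕ} : absN i (church k) = absN i (church k') → k = k' := by
  induction i with
  | zero =>
      intro h
      simp only [absN, church] at h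
      injection h with h1
      injection h1 with h2
      exact churchBody_inj h2
  | succ i ih =>
      intro h
      simp only [absN] at h
      injection h with h2
      exact ih h2

/-- spine length -/
def len : ℕ → Lam → ℕ
  | d, app a _ => len d a + 1
  | _, _ => 0

def phiApp : Lam → Lam → Lam
  | abs u, _ => u
  | var m, w => app (var m) w
  | app x y, w => app (app x y) w

theorem phiApp_nonabs {u : Lam} (h : ∀ c, u ≠ abs c) (w : Lam) : phiApp u w = app u w := by
  cases u with
  | var m => rfl
  | app x y => rfl
  | abs c => exact absurd rfl (h c)

/-- the effect of substituting `λx₁…λxₙ.c_k` in a β-normal form -/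
def phi (k n : ℕ) : ℕ → Lam → Lam
  | d, var m => if m = d then absN n (church k) else if d < m then var (m-1) else var m
  | d, app a b => phiApp (phi k n d a) (phi k n d b)
  | d, abs a => abs (phi k n (d+1) a)

theorem not_headed_app {d : ℕ} {a b : Lam} (h : ¬ Headed d a) : ¬ Headed d (app a b) := by
  intro hh; cases hh with
  | app _ h2 => exact h h2

theorem phi_main (k n : ℕ) : ∀ (t : Lam) (d j : ℕ), Normal t →
    size t + j ≤ n →
    (Headed d t → phi k n d t = absN (n - len d t) (church k) ∧ len d t < size t ∧
       Steps (subst t d (absN n (church k))) (phi k n d t)) ∧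
    (¬ Headed d t → Steps (subst t d (absN n (church k))) (phi k n d t) ∧
       Normal (phi k n d t) ∧ (∀ u, phi k n d t = abs u → ∃ a', t = abs a')) := by
  intro t
  induction t with
  | var m =>
      intro d j hn hs
      constructor
      · intro hh
        have hm : m = d := by cases hh; rfl
        subst hm
        refine ⟨by simp [phi, len], by simp [len, size], ?_⟩
        rw [show subst (var m) m (absN n (church k)) = absN n (church k) from by simp [subst],
            show phi k n m (var m) = absN n (church k) from by simp [phi]]
        exact Steps.refl'
      · intro hh
        have hm : m ≠ d := by rintro rfl; exact hh (Headed.var m)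
        refine ⟨?_, ?_, ?_⟩
        · rw [show subst (var m) d (absN n (church k)) = phi k n d (var m) from by
            simp [subst, phi, hm]]
          exact Steps.refl'
        · simp only [phi]
          split_ifs with h1 h2
          · exact absurd h1 hm
          · exact Normal.var _
          · exact Normal.var _
        · intro u
          simp only [phi]
          split_ifs with h1 h2
          · exact fun _ => absurd h1 hm
          · intro hc; cases hc
          · intro hc; cases hc
  | app a b iha ihb =>
      intro d j hn hs
      have hna : ∀ c, a ≠ abs c := hn.notAbs
      have hsz : size (app a b) = size a + size b + 1 := rfl
      have hsb1 : 1 ≤ size b := by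
        cases b <;> simp [size] <;> omega
      have IH_a := iha d (j+1) hn.appFun (by omega)
      have IH_b := ihb d 0 hn.appArg (by omega)
      by_cases hH : Headed d a
      · obtain ⟨ea, hlen, sa⟩ := IH_a.1 hH
        have hlen2 : len d a < n := by omega
        have hkey : n - len d a = (n - len d (app a b)) + 1 := by
          simp only [len]; omega
        have eq1 : phi k n d (app a b) = absN (n - len d (app a b)) (church k) := by
          show phiApp (phi k n d a) (phi k n d b) = _
          rw [ea, hkey]
          rfl
        constructor
        · intro _
          refine ⟨eq1, by simp only [len, hsz]; omega, ?_⟩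
          rw [show subst (app a b) d (absN n (church k))
              = app (subst a d (absN n (church k))) (subst b d (absN n (church k))) from rfl]
          have s1 : Steps (app (subst a d (absN n (church k))) (subst b d (absN n (church k))))
              (app (absN (n - len d a) (church k)) (subst b d (absN n (church k)))) := by
            rw [← ea]
            exact Steps.appL _ sa
          refine Relation.ReflTransGen.trans s1 ?_
          rw [eq1, hkey]
          refine Relation.ReflTransGen.single ?_
          have hb : Step (app (abs (absN (n - len d (app a b)) (church k)))
              (subst b d (absN n (church k))))
              (subst (absN (n - len d (app a b)) (church k)) 0
                (subst b d (absN n (church k)))) := Step.beta _ _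
          rwa [subst_fvb (absN_fvb (church_fvb k) _) 0 _ (le_refl 0)] at hb
        · intro hh
          exact absurd (Headed.app b hH) hh
      · obtain ⟨sa, na, nsa⟩ := IH_a.2 hH
        have sb : Steps (subst b d (absN n (church k))) (phi k n d b) ∧
            Normal (phi k n d b) := by
          by_cases hHb : Headed d b
          · obtain ⟨eb, _, sb⟩ := IH_b.1 hHb
            exact ⟨sb, by rw [eb]; exact absN_normal (church_normal k) _⟩
          · obtain ⟨sb, nb, _⟩ := IH_b.2 hHb
            exact ⟨sb, nb⟩
        have hnabs : ∀ c, phi k n d a ≠ abs c := by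
          intro c hc
          rcases nsa c hc with ⟨a', ha'⟩
          exact hna a' ha'
        have eq2 : phi k n d (app a b) = app (phi k n d a) (phi k n d b) := by
          show phiApp _ _ = _
          exact phiApp_nonabs hnabs _
        constructor
        · intro hh
          cases hh with
          | app _ h2 => exact absurd h2 hH
        · intro _
          refine ⟨?_, ?_, ?_⟩
          · rw [eq2]
            exact Steps.appCong sa sb.1
          · rw [eq2]
            exact Normal.app_intro na sb.2 hnabs
          · intro u
            rw [eq2]
            intro hc
            cases hc
  | abs a ih =>
      intro d j hn hs
      have IH := ih (d+1) 0 hn.absBody (by simp [size] at hs ⊢; omega)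
      have sa : Steps (subst a (d+1) (absN n (church k))) (phi k n (d+1) a) ∧
          Normal (phi k n (d+1) a) := by
        by_cases hH : Headed (d+1) a
        · obtain ⟨ea, _, s1⟩ := IH.1 hH
          exact ⟨s1, by rw [ea]; exact absN_normal (church_normal k) _⟩
        · obtain ⟨s1, n1, _⟩ := IH.2 hH
          exact ⟨s1, n1⟩
      constructor
      · intro hh; cases hh
      · intro _
        refine ⟨?_, Normal.abs_intro sa.2, ?_⟩
        · rw [show subst (abs a) d (absN n (church k))
              = abs (subst a (d+1) (lift 0 (absN n (church k)))) from rfl,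
            lift_fvb (absN_fvb (church_fvb k) _) 0 (le_refl 0)]
          exact Steps.absCong sa.1
        · intro u h
          exact ⟨a, rfl⟩

end Lam

namespace Lam

/-! ### I. distinctness of the normal forms, and free variables along reductions -/

theorem phi_not_free (k k' n : ℕ) : ∀ (t : Lam) (d : ℕ), ¬ Free d t →
    phi k n d t = phi k' n d t := by
  intro t
  induction t with
  | var m =>
      intro d hf
      have hm : m ≠ d := fun h => hf (by rw [h]; rfl)
      simp [phi, hm]
  | app a b iha ihb =>
      intro d hf
      have hfa : ¬ Free d a := fun h => hf (Or.inl h)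
      have hfb : ¬ Free d b := fun h => hf (Or.inr h)
      show phiApp _ _ = phiApp _ _
      rw [iha d hfa, ihb d hfb]
  | abs a ih =>
      intro d hf
      show abs _ = abs _
      rw [ih (d+1) hf]

theorem phi_inj (k k' n : ℕ) (hkk : k ≠ k') : ∀ (t : Lam) (d j : ℕ), Normal t →
    size t + j ≤ n → Free d t → phi k n d t ≠ phi k' n d t := by
  intro t
  induction t with
  | var m =>
      intro d j hn hs hf
      have hm : m = d := hf.symm
      subst hm
      simp only [phi, if_pos rfl]
      intro h
      exact hkk (absN_church_inj h)
  | app a b iha ihb =>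
      intro d j hn hs hf
      by_cases hH : Headed d (app a b)
      · obtain ⟨e1, _, _⟩ := (phi_main k n (app a b) d j hn hs).1 hH
        obtain ⟨e2, _, _⟩ := (phi_main k' n (app a b) d j hn hs).1 hH
        rw [e1, e2]
        intro h
        exact hkk (absN_church_inj h)
      · have hHa : ¬ Headed d a := fun h => hH (Headed.app b h)
        have hna : ∀ c, a ≠ abs c := hn.notAbs
        have hsb1 : 1 ≤ size b := by cases b <;> simp [size]
        have H1 := ((phi_main k n a d (j+1) hn.appFun (by simp [size] at hs; omega)).2 hHa).2.2
        have H2 := ((phi_main k' n a d (j+1) hn.appFun (by simp [size] at hs; omega)).2 hHa).2.2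
        have hnabs1 : ∀ c, phi k n d a ≠ abs c := by
          intro c hc; rcases H1 c hc with ⟨a', ha'⟩; exact hna a' ha'
        have hnabs2 : ∀ c, phi k' n d a ≠ abs c := by
          intro c hc; rcases H2 c hc with ⟨a', ha'⟩; exact hna a' ha'
        have eqk : phi k n d (app a b) = app (phi k n d a) (phi k n d b) :=
          phiApp_nonabs hnabs1 _
        have eqk' : phi k' n d (app a b) = app (phi k' n d a) (phi k' n d b) :=
          phiApp_nonabs hnabs2 _
        rw [eqk, eqk']
        intro h
        injection h with h1 h2
        rcases hf with hfa | hfb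
        · exact iha d (j+1) hn.appFun (by simp [size] at hs; omega) hfa h1
        · exact ihb d 0 hn.appArg (by simp [size] at hs; omega) hfb h2
  | abs a ih =>
      intro d j hn hs hf
      show Lam.abs _ ≠ Lam.abs _
      intro h
      injection h with h1
      exact ih (d+1) 0 hn.absBody (by simp [size] at hs; omega) hf h1

theorem fvb_step {t s : Lam} (h : Step t s) : ∀ {c}, fvb c t → fvb c s := by
  induction h with
  | beta a b => intro c hf; exact fvb_subst 0 b hf.1 hf.2 (by omega)
  | appL b _ ih => intro c hf; exact ⟨ih hf.1, hf.2⟩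
  | appR a _ ih => intro c hf; exact ⟨hf.1, ih hf.2⟩
  | abs _ ih => intro c hf; exact ih hf

theorem fvb_steps {t s : Lam} (h : Steps t s) {c : ℕ} (hf : fvb c t) : fvb c s := by
  induction h with
  | refl => exact hf
  | tail _ h2 ih => exact fvb_step h2 ih

end Lam

namespace Lam

theorem phi_red (k n : ℕ) {t : Lam} (hn : Normal t) (hs : size t ≤ n) :
    Steps (subst t 0 (absN n (church k))) (phi k n 0 t) ∧ Normal (phi k n 0 t) := by
  by_cases hH : Headed 0 t
  · obtain ⟨e, _, s⟩ := (phi_main k n t 0 0 hn (by omega)).1 hH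
    exact ⟨s, by rw [e]; exact absN_normal (church_normal k) _⟩
  · obtain ⟨s, nn, _⟩ := (phi_main k n t 0 0 hn (by omega)).2 hH
    exact ⟨s, nn⟩

end Lam

open Lam in
theorem range_infinite_of_normalizable' (F N : Lam)
    (hcl : Closed (Lam.abs F))
    (hxbo : ∀ t', BOSteps F t' → Free 0 t')
    (hN : Steps F N) (hNnf : Normal N) :
    (∀ k m : ℕ, k ≠ m →
        ¬ SimH (subst F 0 (absN (size N) (church k)))
               (subst F 0 (absN (size N) (church m)))) ∧
    (Set.range fun u : {u : Lam // Closed u} =>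
        Quot.mk SimH (subst F 0 u.1)).Infinite := by
  have hfree0N : Free 0 N := hxbo N (steps_bosteps hN)
  have main : ∀ k m : ℕ, k ≠ m →
      ¬ SimH (subst F 0 (absN (size N) (church k)))
             (subst F 0 (absN (size N) (church m))) := by
    intro k m hkm
    have hk := phi_red k (size N) hNnf (le_refl _)
    have hm := phi_red m (size N) hNnf (le_refl _)
    have bok : BOSteps (subst F 0 (absN (size N) (church k))) (phi k (size N) 0 N) :=
      steps_bosteps (Relation.ReflTransGen.trans (steps_subst_left hN 0 _) hk.1)
    have bom : BOSteps (subst F 0 (absN (size N) (church m))) (phi m (size N) 0 N) :=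
      steps_bosteps (Relation.ReflTransGen.trans (steps_subst_left hN 0 _) hm.1)
    exact not_simH_of_distinct_nf bok bom hk.2 hm.2
      (phi_inj k m (size N) hkm N 0 0 hNnf (by omega) hfree0N)
  refine ⟨main, ?_⟩
  have hclosed : ∀ k : ℕ, Closed (absN (size N) (church k)) := fun k =>
    closed_of_fvb0 (absN_fvb (church_fvb k) _)
  apply Set.infinite_of_injective_forall_mem
    (f := fun k : ℕ => Quot.mk SimH (subst F 0 (absN (size N) (church k))))
  · intro k m h
    by_contra hne
    exact main k m hne ((simH_equivalence.eqvGen_iff).mp (Quot.eqvGen_exact h))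
  · intro k
    exact ⟨⟨absN (size N) (church k), hclosed k⟩, rfl⟩


open Lam in
/-- if `λx.F` is closed, `x ∈ βΩ(F)` and `F` is β-normalizable with
β-normal form `N`, then the terms `F[x := λx₁…λxₙ.c_k]` (`n` the number of symbols of
`N`, `c_k` the Church numeral for `k`) are pairwise non-`≃`; hence the range of `λx.F`
in H is infinite. -/
theorem range_infinite_of_normalizable (F N : Lam)
    (hcl : Closed (Lam.abs F))
    (hxbo : ∀ t', BOSteps F t' → Free 0 t')
    (hN : Steps F N) (hNnf : Normal N) :
    (∀ k m : ℕ, k ≠ m →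
        ¬ SimH (subst F 0 (absN (size N) (church k)))
               (subst F 0 (absN (size N) (church m)))) ∧
    (Set.range fun u : {u : Lam // Closed u} =>
        Quot.mk SimH (subst F 0 u.1)).Infinite := by
  exact range_infinite_of_normalizable' F N hcl hxbo hN hNnf
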